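/- There exists a constant C₀ ≥ 20 such that for every C ≥ C₀: if (X, Y) ~ G' (with Y denoting the last N coordinates, Y_i = (H·X)_i² − ε), then Pr[ trnc(X, Y) ≠ (X, Y) ] ≤ 2·N^{−2}, i.e., with probability at least 1 − 2N^{−2} every coordinate of (X,Y) lies in [−1, 1]. -/

import Mathlib

open MeasureTheory ProbabilityTheory Finset
open scoped NNReal ENNReal

noncomputable section

/-- Bit strings of length `n`; there are `N = 2^n` of them. -/
abbrev BV (n : ℕ) := Fin n → Bool

/-- Inner product (mod nothing, just the count) of two bit strings. -/
def bip {n : ℕ} (x y : BV n) : ℕ := (Finset.univ.filter fun i => x i && y i).card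

/-- The `N × N` normalized Walsh-Hadamard matrix, `H_{x,y} = (-1)^{⟨x,y⟩} / √N`. -/
def Had (n : ℕ) : Matrix (BV n) (BV n) ℝ :=
  Matrix.of fun x y => (-1 : ℝ) ^ bip x y / Real.sqrt (2 ^ n)

/-- `ε = 1 / (C ln N)` with `N = 2^n`. -/
def eps (C : ℝ) (n : ℕ) : ℝ := 1 / (C * Real.log (2 ^ n))

/-- The Gaussian vector `X` with i.i.d. `N(0, ε)` coordinates. -/
def gaussVec (C : ℝ) (n : ℕ) : Measure (BV n → ℝ) :=
  Measure.pi fun _ => gaussianReal 0 (eps C n).toNNReal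

/-- The distribution `G'` of `Z = (X, Y∘Y - ε·𝟙)` with `Y = H·X`, packed as a
function on `BV n ⊕ BV n` (first `N` coordinates are `X`, last `N` are `Y∘Y - ε`). -/
def Gmeas' (C : ℝ) (n : ℕ) : Measure (BV n ⊕ BV n → ℝ) :=
  (gaussVec C n).map fun X => Sum.elim X fun i => ((Had n).mulVec X i) ^ 2 - eps C n

/-- Truncation to `[-1, 1]`. -/
def trnc (a : ℝ) : ℝ := min 1 (max (-1) a)

/-- Randomized rounding of `a` to `±1`: output `1` with probability `(1 + trnc a)/2`
and `-1` with probability `(1 - trnc a)/2`. -/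
def roundM (a : ℝ) : Measure ℝ :=
  ((1 + trnc a) / 2).toNNReal • Measure.dirac 1 +
    ((1 - trnc a) / 2).toNNReal • Measure.dirac (-1)

/-- The distribution `D` on `{±1}^{2N}`: sample `z ~ G'` and round each coordinate
independently. -/
def Dmeas (C : ℝ) (n : ℕ) : Measure (BV n ⊕ BV n → ℝ) :=
  (Gmeas' C n).bind fun z => Measure.pi fun i => roundM (z i)

/-- `F : ℝ^ι → ℝ` is multilinear if `F z = Σ_S F̂(S) ∏_{i ∈ S} z_i`. -/
def IsMultilinear {ι : Type*} [Fintype ι] [DecidableEq ι] (F : (ι → ℝ) → ℝ) : Prop :=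
  ∃ c : Finset ι → ℝ, ∀ z, F z = ∑ S : Finset ι, c S * ∏ i ∈ S, z i

/-- The Fourier coefficient `F̂(S)` of `F` (over the hypercube `{±1}^ι`); for a
multilinear `F` these are precisely its multilinear coefficients. -/
def mlCoeff {ι : Type*} [Fintype ι] [DecidableEq ι] (F : (ι → ℝ) → ℝ) (S : Finset ι) : ℝ :=
  (∑ z : ι → Bool, F (fun i => if z i then 1 else -1) * ∏ i ∈ S, (if z i then (1 : ℝ) else -1)) /
    2 ^ Fintype.card ι

/-- `L_{1,2}(F) = Σ_{|S| = 2} |F̂(S)|`. -/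
def L12 {ι : Type*} [Fintype ι] [DecidableEq ι] (F : (ι → ℝ) → ℝ) : ℝ :=
  ∑ S ∈ Finset.univ.filter (fun S : Finset ι => S.card = 2), |mlCoeff F S|

/-- The restriction `F_ρ` of `F` under `ρ = (S, w)`: coordinates outside `S` are
fixed to the values of `w`. -/
def restrictML {ι : Type*} [DecidableEq ι] (F : (ι → ℝ) → ℝ) (S : Finset ι)
    (w : ι → ℝ) : (ι → ℝ) → ℝ :=
  fun y => F fun i => if i ∈ S then y i else w i

/-- `φ(X, Y) = (1/N) Σ_i (Σ_j H_{ij} X_j)² Y_i`. -/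
def phi (n : ℕ) (X Y : BV n → ℝ) : ℝ :=
  (∑ i, ((Had n).mulVec X i) ^ 2 * Y i) / 2 ^ n

/-- The multilinear part `φ_{i≠j}(X, Y) = (1/N) Σ_i Σ_{j ≠ k} H_{ij} H_{ik} X_j X_k Y_i`. -/
def phiOff (n : ℕ) (X Y : BV n → ℝ) : ℝ :=
  (∑ i, ∑ j, ∑ k ∈ Finset.univ \ {j}, Had n i j * Had n i k * X j * X k * Y i) / 2 ^ n

/-- The Fourier coefficient `f̂(x) = 2^{-n} Σ_y f(y) (-1)^{⟨x,y⟩}` of `f : {0,1}^n → {±1}`. -/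
def hatF (n : ℕ) (f : BV n → ℝ) (x : BV n) : ℝ :=
  (∑ y, f y * (-1 : ℝ) ^ bip x y) / 2 ^ n

section AuxChernoff

lemma my_pdf_identity (v : ℝ≥0) (hv : v ≠ 0) (s x : ℝ) :
    Real.exp (s * x) * gaussianPDFReal 0 v x
      = Real.exp (v * s ^ 2 / 2) * gaussianPDFReal (s * v) v x := by
  have hv' : (v : ℝ) ≠ 0 := by exact_mod_cast hv
  simp only [gaussianPDFReal]
  rw [show Real.exp (s * x) * ((Real.sqrt (2 * Real.pi * v))⁻¹ * Real.exp (-(x - 0) ^ 2 / (2 * v)))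
      = (Real.sqrt (2 * Real.pi * v))⁻¹ * Real.exp (s * x + -(x - 0) ^ 2 / (2 * v)) by
        rw [Real.exp_add]; ring,
    show Real.exp (v * s ^ 2 / 2) * ((Real.sqrt (2 * Real.pi * v))⁻¹ *
        Real.exp (-(x - s * v) ^ 2 / (2 * v)))
      = (Real.sqrt (2 * Real.pi * v))⁻¹ * Real.exp (v * s ^ 2 / 2 + -(x - s * v) ^ 2 / (2 * v)) by
        rw [Real.exp_add]; ring]
  congr 1
  field_simp
  ring

lemma my_int_exp (v : ℝ≥0) (hv : v ≠ 0) (s : ℝ) :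
    Integrable (fun x => Real.exp (s * x)) (gaussianReal 0 v) := by
  rw [gaussianReal_of_var_ne_zero _ hv]
  have hpdf : (gaussianPDF 0 v) = fun x => ((gaussianPDFReal 0 v x).toNNReal : ℝ≥0∞) := by
    ext x; rw [gaussianPDF, ENNReal.ofReal]
  rw [hpdf, integrable_withDensity_iff_integrable_smul
    ((measurable_gaussianPDFReal 0 v).real_toNNReal)]
  have : (fun x => (gaussianPDFReal 0 v x).toNNReal • Real.exp (s * x))
      = fun x => Real.exp (v * s ^ 2 / 2) * gaussianPDFReal (s * v) v x := by
    funext x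
    rw [NNReal.smul_def, smul_eq_mul, Real.coe_toNNReal _ (gaussianPDFReal_nonneg 0 v x),
      mul_comm, my_pdf_identity v hv]
  rw [this]
  exact (integrable_gaussianPDFReal _ _).const_mul _

lemma my_mgf_eq (v : ℝ≥0) (hv : v ≠ 0) (s : ℝ) :
    ∫ x, Real.exp (s * x) ∂(gaussianReal 0 v) = Real.exp (v * s ^ 2 / 2) := by
  rw [gaussianReal_of_var_ne_zero _ hv]
  have hpdf : (gaussianPDF 0 v) = fun x => ((gaussianPDFReal 0 v x).toNNReal : ℝ≥0∞) := by
    ext x; rw [gaussianPDF, ENNReal.ofReal]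
  rw [hpdf, integral_withDensity_eq_integral_smul
    ((measurable_gaussianPDFReal 0 v).real_toNNReal)]
  have : (fun x => (gaussianPDFReal 0 v x).toNNReal • Real.exp (s * x))
      = fun x => Real.exp (v * s ^ 2 / 2) * gaussianPDFReal (s * v) v x := by
    funext x
    rw [NNReal.smul_def, smul_eq_mul, Real.coe_toNNReal _ (gaussianPDFReal_nonneg 0 v x),
      mul_comm, my_pdf_identity v hv]
  rw [this, integral_const_mul, integral_gaussianPDFReal_eq_one _ hv, mul_one]

lemma my_integral_pi_prod {ι : Type*} [Fintype ι] (μ : Measure ℝ) [SigmaFinite μ]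
    (f : ι → ℝ → ℝ) :
    ∫ x : ι → ℝ, ∏ i, f i (x i) ∂(Measure.pi fun _ => μ) = ∏ i, ∫ x, f i x ∂μ := by
  letI : MeasureSpace ℝ := ⟨μ⟩
  exact integral_fintype_prod_eq_prod f

lemma my_integrable_pi_prod {ι : Type*} [Fintype ι] (μ : Measure ℝ) [SigmaFinite μ]
    {f : ι → ℝ → ℝ} (hf : ∀ i, Integrable (f i) μ) :
    Integrable (fun x : ι → ℝ => ∏ i, f i (x i)) (Measure.pi fun _ => μ) := by
  letI : MeasureSpace ℝ := ⟨μ⟩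
  exact Integrable.fintype_prod hf

lemma my_exp_prod_eq {ι : Type*} [Fintype ι] (a : ι → ℝ) (t : ℝ) (X : ι → ℝ) :
    Real.exp (t * ∑ j, a j * X j) = ∏ j, Real.exp ((t * a j) * X j) := by
  rw [← Real.exp_sum, Finset.mul_sum]
  congr 1; apply Finset.sum_congr rfl; intro j _; ring

lemma my_chernoff {ι : Type*} [Fintype ι] (v : ℝ≥0) (hv : v ≠ 0)
    (a : ι → ℝ) (hA : ∑ j, (a j) ^ 2 ≤ 1) :
    (Measure.pi fun _ : ι => gaussianReal 0 v) {X | 1 ≤ ∑ j, a j * X j}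
      ≤ ENNReal.ofReal (Real.exp (-(1 / (2 * v)))) := by
  set PP := Measure.pi fun _ : ι => gaussianReal 0 v with hPP
  have hvpos : (0:ℝ) < v := lt_of_le_of_ne v.coe_nonneg (by exact_mod_cast hv.symm)
  set t : ℝ := 1 / v with ht
  have htpos : 0 < t := by positivity
  have hint : Integrable (fun X : ι → ℝ => Real.exp (t * ∑ j, a j * X j)) PP := by
    simp only [my_exp_prod_eq]
    exact my_integrable_pi_prod _ (fun j => my_int_exp v hv _)
  have hmgf : mgf (fun X : ι → ℝ => ∑ j, a j * X j) PP t
      = Real.exp ((v * t ^ 2 * ∑ j, (a j) ^ 2) / 2) := by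
    rw [mgf]
    simp only [my_exp_prod_eq]
    rw [my_integral_pi_prod _ (fun j x => Real.exp ((t * a j) * x))]
    have h0 : ∀ j : ι, ∫ x, Real.exp ((t * a j) * x) ∂(gaussianReal 0 v)
        = Real.exp ((v * t ^ 2 / 2) * (a j) ^ 2) := fun j => by
      rw [my_mgf_eq v hv]; congr 1; ring
    simp only [h0]
    rw [← Real.exp_sum, ← Finset.mul_sum]
    congr 1
    ring
  have key := measure_ge_le_exp_mul_mgf (μ := PP)
    (X := fun X : ι → ℝ => ∑ j, a j * X j) 1 htpos.le hint
  rw [hmgf, ← Real.exp_add] at key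
  have hexp : -t * 1 + (v * t ^ 2 * ∑ j, (a j) ^ 2) / 2 ≤ -(1 / (2 * v)) := by
    have h1 : v * t ^ 2 * ∑ j, (a j) ^ 2 ≤ v * t ^ 2 := by
      have : (0:ℝ) ≤ v * t ^ 2 := by positivity
      nlinarith
    have h2 : (v:ℝ) * t ^ 2 = 1 / v := by
      rw [ht]; field_simp
    have h3 : t = 1 / v := ht
    have h4 : -(1 / (v:ℝ)) + (1 / (v:ℝ)) / 2 = -(1 / (2 * v)) := by
      field_simp; ring
    linarith
  calc PP {X | 1 ≤ ∑ j, a j * X j}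
      = ENNReal.ofReal (PP {X | 1 ≤ ∑ j, a j * X j}).toReal :=
        (ENNReal.ofReal_toReal (measure_ne_top _ _)).symm
    _ ≤ ENNReal.ofReal (Real.exp (-t * 1 + (v * t ^ 2 * ∑ j, (a j) ^ 2) / 2)) :=
        ENNReal.ofReal_le_ofReal key
    _ ≤ _ := ENNReal.ofReal_le_ofReal (Real.exp_le_exp.2 hexp)

lemma my_ne_trnc {r : ℝ} (h : r ≠ trnc r) : 1 < r ∨ r < -1 := by
  by_contra hc
  push_neg at hc
  exact h (by rw [trnc, max_eq_right hc.2, min_eq_right hc.1])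

end AuxChernoff

/-- There exists a constant `C₀ ≥ 20` such that for every `C ≥ C₀`:
if `(X, Y) ~ G'` then `Pr[trnc(X, Y) ≠ (X, Y)] ≤ 2 N⁻²`. -/
theorem stmt14 :
    ∃ C₀ : ℝ, 20 ≤ C₀ ∧
      ∀ C : ℝ, C₀ ≤ C → ∀ n : ℕ, 1 ≤ n →
        ((Gmeas' C n) {z | ∃ i, z i ≠ trnc (z i)}).toReal ≤ 2 / (2 ^ n : ℝ) ^ 2 := by
  refine ⟨20, le_refl _, fun C hC n hn => ?_⟩
  have hC0 : (0:ℝ) < C := by linarith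
  set N : ℝ := (2:ℝ) ^ n with hN
  have hN2 : (2:ℝ) ≤ N := by
    calc (2:ℝ) = 2 ^ 1 := (pow_one 2).symm
    _ ≤ 2 ^ n := pow_le_pow_right₀ (by norm_num) hn
  have hN0 : (0:ℝ) < N := by positivity
  set L : ℝ := Real.log ((2:ℝ) ^ n) with hLdef
  have hlog2 : (0.6931471803:ℝ) < Real.log 2 := Real.log_two_gt_d9
  have hL2 : Real.log 2 ≤ L := by
    rw [hLdef, Real.log_pow]
    calc Real.log 2 = 1 * Real.log 2 := (one_mul _).symm
    _ ≤ (n:ℝ) * Real.log 2 := by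
        apply mul_le_mul_of_nonneg_right _ (by linarith)
        exact_mod_cast hn
  have hL : (0:ℝ) < L := by linarith
  have heps_pos : 0 < eps C n := by rw [eps]; positivity
  have heps_lt1 : eps C n < 1 := by
    rw [eps]
    rw [div_lt_one (by positivity)]
    nlinarith
  set v : ℝ≥0 := (eps C n).toNNReal with hvdef
  have hvcoe : (v:ℝ) = eps C n := Real.coe_toNNReal _ heps_pos.le
  have hv : v ≠ 0 := by
    intro h
    rw [h] at hvcoe
    simp at hvcoe
    linarith
  -- the coefficient vectors
  set a : (BV n ⊕ BV n) → BV n → ℝ :=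
    Sum.elim (fun x j => if j = x then 1 else 0) (fun i j => Had n i j) with hadef
  have hcard : (Fintype.card (BV n) : ℝ) = N := by
    simp [hN]
  have hA : ∀ c, ∑ j, (a c j) ^ 2 = 1 := by
    rintro (x | i)
    · simp only [hadef, Sum.elim_inl]
      rw [Finset.sum_eq_single x]
      · simp
      · intro j _ hj; simp [hj]
      · simp
    · simp only [hadef, Sum.elim_inr]
      have hsq : ∀ j, (Had n i j) ^ 2 = N⁻¹ := by
        intro j
        rw [Had]
        simp only [Matrix.of_apply]
        rw [div_pow, ← pow_mul, mul_comm (bip i j) 2, pow_mul, neg_one_sq, one_pow,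
          Real.sq_sqrt (by positivity : (0:ℝ) ≤ (2:ℝ)^n)]
        simp [hN]
      simp only [hsq]
      rw [Finset.sum_const, Finset.card_univ, nsmul_eq_mul, hcard]
      field_simp
  -- measurability
  set F : (BV n → ℝ) → (BV n ⊕ BV n → ℝ) :=
    fun X => Sum.elim X fun i => ((Had n).mulVec X i) ^ 2 - eps C n with hFdef
  have hmv : ∀ (i : BV n) (X : BV n → ℝ), (Had n).mulVec X i = ∑ j, Had n i j * X j := by
    intro i X; rfl
  have hF : Measurable F := by
    rw [measurable_pi_iff]
    rintro (x | i)
    · exact measurable_pi_apply x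
    · have h1 : Measurable fun X : BV n → ℝ => ∑ j, Had n i j * X j :=
        Finset.measurable_sum _ (fun j _ => (measurable_pi_apply j).const_mul _)
      have : (fun X : BV n → ℝ => F X (Sum.inr i))
          = fun X => (∑ j, Had n i j * X j) ^ 2 - eps C n := by
        funext X; rw [hFdef]; simp [hmv]
      rw [this]
      exact (h1.pow_const 2).sub_const _
  have htrnc : Measurable trnc := by
    have : Continuous trnc := continuous_const.min (continuous_const.max continuous_id)
    exact this.measurable
  have hE : MeasurableSet {z : BV n ⊕ BV n → ℝ | ∃ i, z i ≠ trnc (z i)} := by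
    have : {z : BV n ⊕ BV n → ℝ | ∃ i, z i ≠ trnc (z i)}
        = ⋃ i, (fun z : BV n ⊕ BV n → ℝ => z i) ⁻¹' {r | r ≠ trnc r} := by
      ext z; simp [Set.mem_iUnion]
    rw [this]
    exact MeasurableSet.iUnion fun i =>
      (measurable_pi_apply i) ((measurableSet_eq_fun measurable_id htrnc).compl)
  rw [show Gmeas' C n = (gaussVec C n).map F from rfl, Measure.map_apply hF hE]
  -- the inclusion
  set A : (BV n ⊕ BV n) → Set (BV n → ℝ) := fun c => {X | 1 ≤ ∑ j, a c j * X j} with hAdef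
  set B : (BV n ⊕ BV n) → Set (BV n → ℝ) := fun c => {X | 1 ≤ ∑ j, (-(a c j)) * X j} with hBdef
  have hsuml : ∀ (x : BV n) (X : BV n → ℝ), ∑ j, a (Sum.inl x) j * X j = X x := by
    intro x X
    simp only [hadef, Sum.elim_inl, ite_mul, one_mul, zero_mul]
    rw [Finset.sum_ite_eq' Finset.univ x X]
    simp
  have hincl : F ⁻¹' {z | ∃ i, z i ≠ trnc (z i)} ⊆ ⋃ c, (A c ∪ B c) := by
    intro X hX
    obtain ⟨c, hc⟩ := hX
    rcases my_ne_trnc hc with h | h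
    · -- F X c > 1
      rcases c with x | i
      · exact Set.mem_iUnion.2 ⟨Sum.inl x, Or.inl (by
          simp only [hAdef, Set.mem_setOf_eq, hsuml]
          exact le_of_lt h)⟩
      · -- (mulVec)^2 - eps > 1
        have hFXc : F X (Sum.inr i) = ((Had n).mulVec X i) ^ 2 - eps C n := rfl
        rw [hFXc] at h
        set m : ℝ := (Had n).mulVec X i with hm
        have hm2 : 1 < m ^ 2 := by nlinarith
        rcases le_or_gt m 0 with hm0 | hm0
        · refine Set.mem_iUnion.2 ⟨Sum.inr i, Or.inr ?_⟩
          simp only [hBdef, Set.mem_setOf_eq, hadef, Sum.elim_inr]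
          have : ∑ j, -Had n i j * X j = -m := by
            rw [hm, hmv]
            rw [← Finset.sum_neg_distrib]
            apply Finset.sum_congr rfl; intro j _; ring
          rw [this]
          nlinarith
        · refine Set.mem_iUnion.2 ⟨Sum.inr i, Or.inl ?_⟩
          simp only [hAdef, Set.mem_setOf_eq, hadef, Sum.elim_inr]
          have : ∑ j, Had n i j * X j = m := by rw [hm, hmv]
          rw [this]
          nlinarith
    · -- F X c < -1
      rcases c with x | i
      · refine Set.mem_iUnion.2 ⟨Sum.inl x, Or.inr ?_⟩
        simp only [hBdef, Set.mem_setOf_eq]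
        have : ∑ j, -(a (Sum.inl x) j) * X j = -(X x) := by
          rw [← hsuml x X, ← Finset.sum_neg_distrib]
          apply Finset.sum_congr rfl; intro j _; ring
        rw [this]
        have : F X (Sum.inl x) = X x := rfl
        rw [this] at h
        linarith
      · exfalso
        have hFXc : F X (Sum.inr i) = ((Had n).mulVec X i) ^ 2 - eps C n := rfl
        rw [hFXc] at h
        nlinarith [sq_nonneg ((Had n).mulVec X i)]
  -- union bound
  set E2 : ℝ := Real.exp (-(1 / (2 * v))) with hE2
  have hbound : gaussVec C n (F ⁻¹' {z | ∃ i, z i ≠ trnc (z i)})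
      ≤ (Fintype.card (BV n ⊕ BV n) : ℝ≥0∞) * (2 * ENNReal.ofReal E2) := by
    calc gaussVec C n (F ⁻¹' {z | ∃ i, z i ≠ trnc (z i)})
        ≤ gaussVec C n (⋃ c, (A c ∪ B c)) := measure_mono hincl
      _ ≤ ∑' c, gaussVec C n (A c ∪ B c) := measure_iUnion_le _
      _ = ∑ c, gaussVec C n (A c ∪ B c) := tsum_fintype _
      _ ≤ ∑ _c : BV n ⊕ BV n, 2 * ENNReal.ofReal E2 := by
          apply Finset.sum_le_sum
          intro c _
          have h1 : gaussVec C n (A c) ≤ ENNReal.ofReal E2 := by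
            rw [show gaussVec C n = Measure.pi fun _ : BV n => gaussianReal 0 v from rfl]
            exact my_chernoff v hv (a c) (le_of_eq (hA c))
          have h2 : gaussVec C n (B c) ≤ ENNReal.ofReal E2 := by
            rw [show gaussVec C n = Measure.pi fun _ : BV n => gaussianReal 0 v from rfl]
            refine my_chernoff v hv (fun j => -(a c j)) ?_
            simp only [neg_sq]
            exact le_of_eq (hA c)
          calc gaussVec C n (A c ∪ B c) ≤ gaussVec C n (A c) + gaussVec C n (B c) :=
                measure_union_le _ _
            _ ≤ ENNReal.ofReal E2 + ENNReal.ofReal E2 := add_le_add h1 h2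
            _ = 2 * ENNReal.ofReal E2 := (two_mul _).symm
      _ = (Fintype.card (BV n ⊕ BV n) : ℝ≥0∞) * (2 * ENNReal.ofReal E2) := by
          rw [Finset.sum_const, Finset.card_univ, nsmul_eq_mul]
  -- final numeric bound
  have hcard2 : (Fintype.card (BV n ⊕ BV n) : ℝ) = 2 * N := by
    simp [hN]
    ring
  have hexp : (1:ℝ) / (2 * v) = C * L / 2 := by
    rw [hvcoe, eps, ← hLdef]
    field_simp
  have hreal : (Fintype.card (BV n ⊕ BV n) : ℝ) * (2 * E2) ≤ 2 / N ^ 2 := by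
    rw [hcard2, hE2, hexp]
    have hNinv : Real.exp (-L) = N⁻¹ := by
      rw [Real.exp_neg, hLdef, Real.exp_log hN0]
    have step1 : Real.exp (-(C * L / 2)) ≤ (N⁻¹) ^ (10:ℕ) := by
      calc Real.exp (-(C * L / 2)) ≤ Real.exp ((10:ℕ) * (-L)) := by
            apply Real.exp_le_exp.2
            push_cast
            nlinarith
        _ = (Real.exp (-L)) ^ (10:ℕ) := Real.exp_nat_mul _ _
        _ = (N⁻¹) ^ (10:ℕ) := by rw [hNinv]
    have h7 : (128:ℝ) ≤ N ^ 7 := by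
      calc (128:ℝ) = 2 ^ 7 := by norm_num
      _ ≤ N ^ 7 := pow_le_pow_left₀ (by norm_num) hN2 7
    have step2 : 2 * N * (2 * (N⁻¹) ^ (10:ℕ)) ≤ 2 / N ^ 2 := by
      have heq : 2 * N * (2 * (N⁻¹) ^ (10:ℕ)) = 4 / N ^ 9 := by
        rw [inv_pow]
        field_simp
        ring
      rw [heq, div_le_div_iff₀ (by positivity) (by positivity)]
      nlinarith [mul_le_mul_of_nonneg_left h7 (le_of_lt (pow_pos hN0 2))]
    calc 2 * N * (2 * Real.exp (-(C * L / 2))) ≤ 2 * N * (2 * (N⁻¹) ^ (10:ℕ)) := by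
          apply mul_le_mul_of_nonneg_left _ (by positivity)
          apply mul_le_mul_of_nonneg_left step1 (by norm_num)
      _ ≤ 2 / N ^ 2 := step2
  have hfin : gaussVec C n (F ⁻¹' {z | ∃ i, z i ≠ trnc (z i)}) ≤ ENNReal.ofReal (2 / N ^ 2) := by
    refine le_trans hbound ?_
    rw [show ((2:ℝ≥0∞) * ENNReal.ofReal E2) = ENNReal.ofReal (2 * E2) by
        rw [ENNReal.ofReal_mul (by norm_num : (0:ℝ) ≤ 2), ENNReal.ofReal_ofNat],
      show ((Fintype.card (BV n ⊕ BV n) : ℝ≥0∞)) = ENNReal.ofReal (Fintype.card (BV n ⊕ BV n)) by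
        rw [ENNReal.ofReal_natCast],
      ← ENNReal.ofReal_mul (by positivity)]
    exact ENNReal.ofReal_le_ofReal hreal
  exact ENNReal.toReal_le_of_le_ofReal (by positivity) hfin
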